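/- Interchange of infimum and integral: for fixed π with L ∈ L¹(π) and bounded spectral function σ, the infimum over all Borel measurable β : [0,1) → ℝ of ∫_0^1 [β(u) + (1-u)^{-1} E_π[(L - β(u))_+]] dΓ_σ(u) equals ∫_0^1 inf_b [b + (1-u)^{-1} E_π[(L-b)_+]] dΓ_σ(u), which equals Γ_σ({0})·E_π[L] + ∫_{(0,1)} ES_{u,π}(L) dΓ_σ(u). Moreover, β achieves the infimum iff β(u) minimizes b ↦ b + (1-u)^{-1} E_π[(L-b)_+] for Γ_σ-a.e. u. -/

import Mathlib

open MeasureTheory Filter Set Topology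
open scoped ENNReal NNReal

lemma gamma_inv_integrable (σ : ℝ → ℝ)
    (hσ_nonneg : ∀ u ∈ Set.Ico (0:ℝ) 1, 0 ≤ σ u)
    (hσ_mono : MonotoneOn σ (Set.Ico (0:ℝ) 1))
    (hσ_bdd : ∃ M, ∀ u ∈ Set.Ico (0:ℝ) 1, σ u ≤ M)
    (hσ_one : ∫ u in (0:ℝ)..1, σ u = 1)
    (Γ : Measure ℝ) [IsProbabilityMeasure Γ]
    (hΓ_supp : Γ (Set.Ico (0:ℝ) 1)ᶜ = 0)
    (hΓ_cdf : ∀ u ∈ Set.Ico (0:ℝ) 1,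
      Γ (Set.Icc 0 u) = ENNReal.ofReal ((1 - u) * σ u + ∫ v in (0:ℝ)..u, σ v)) :
    Integrable (fun u => (1 - u)⁻¹) Γ := by
  classical
  obtain ⟨M, hM⟩ := hσ_bdd
  have h01 : (0:ℝ) ∈ Ico (0:ℝ) 1 := ⟨le_refl _, one_pos⟩
  have hM0 : 0 ≤ M := le_trans (hσ_nonneg 0 h01) (hM 0 h01)
  set σ' : ℝ → ℝ := fun v => if v < 1 then σ (max v 0) else M with hσ'def
  have hmem : ∀ v : ℝ, v < 1 → max v 0 ∈ Ico (0:ℝ) 1 :=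
    fun v hv => ⟨le_max_right _ _, max_lt hv one_pos⟩
  have hσ'eq : ∀ v ∈ Ico (0:ℝ) 1, σ' v = σ v := by
    intro v hv
    simp only [hσ'def]
    rw [if_pos hv.2, max_eq_left hv.1]
  have hσ'le : ∀ v, σ' v ≤ M := by
    intro v; simp only [hσ'def]; split_ifs with h
    · exact hM _ (hmem v h)
    · exact le_refl M
  have hσ'nonneg : ∀ v, 0 ≤ σ' v := by
    intro v; simp only [hσ'def]; split_ifs with h
    · exact hσ_nonneg _ (hmem v h)
    · exact hM0
  have hσ'mono : Monotone σ' := by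
    intro a b hab
    simp only [hσ'def]
    split_ifs with ha hb hb
    · exact hσ_mono (hmem a ha) (hmem b hb) (max_le_max hab (le_refl 0))
    · exact hM _ (hmem a ha)
    · exact absurd (lt_of_le_of_lt hab hb) ha
    · exact le_refl M
  have hσ'meas : Measurable σ' := hσ'mono.measurable
  have hσ'ii : ∀ a b : ℝ, IntervalIntegrable σ' volume a b :=
    fun a b => hσ'mono.intervalIntegrable
  set P : ℝ → ℝ := fun x => ∫ t in (0:ℝ)..x, σ' t with hPdef
  have hPcont : Continuous P := intervalIntegral.continuous_primitive hσ'ii 0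
  have hae1 : ∀ᵐ x : ℝ, x ≠ (1:ℝ) := by
    rw [ae_iff]
    simp only [not_not]
    rw [show {x : ℝ | x = 1} = {(1:ℝ)} from rfl]
    exact Real.volume_singleton
  have hP_eq : ∀ u ∈ Ico (0:ℝ) 1, P u = ∫ v in (0:ℝ)..u, σ v := by
    intro u hu
    apply intervalIntegral.integral_congr
    intro x hx
    rw [uIcc_of_le hu.1] at hx
    exact hσ'eq x ⟨hx.1, lt_of_le_of_lt hx.2 hu.2⟩
  have hP1 : P 1 = 1 := by
    have heqP : P 1 = ∫ u in (0:ℝ)..1, σ u := by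
      apply intervalIntegral.integral_congr_ae
      filter_upwards [hae1] with x hx hx2
      rw [uIoc_of_le (by norm_num : (0:ℝ) ≤ 1)] at hx2
      exact hσ'eq x ⟨hx2.1.le, lt_of_le_of_ne hx2.2 hx⟩
    rw [heqP, hσ_one]
  have hP_mono : Monotone P := by
    intro a b hab
    simp only [hPdef]
    rw [← intervalIntegral.integral_add_adjacent_intervals (hσ'ii 0 a) (hσ'ii a b)]
    have : 0 ≤ ∫ t in a..b, σ' t :=
      intervalIntegral.integral_nonneg hab (fun x _ => hσ'nonneg x)
    linarith
  have hP0 : P 0 = 0 := intervalIntegral.integral_same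
  have hP_nonneg : ∀ x : ℝ, 0 ≤ x → 0 ≤ P x := fun x hx => hP0 ▸ hP_mono hx
  have hP_le_one : ∀ x : ℝ, x ≤ 1 → P x ≤ 1 := fun x hx => hP1 ▸ hP_mono hx
  have hP_tail : ∀ s : ℝ, 1 - P s = ∫ t in s..1, σ' t := by
    intro s
    have hadd : P s + ∫ t in s..1, σ' t = P 1 :=
      intervalIntegral.integral_add_adjacent_intervals (hσ'ii 0 s) (hσ'ii s 1)
    rw [hP1] at hadd
    linarith
  set T : ℝ → ℝ := fun s => (1 - P s) - (1 - s) * σ' s with hTdef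
  have hT_nonneg : ∀ s ∈ Ico (0:ℝ) 1, 0 ≤ T s := by
    intro s hs
    have h1 : (∫ _t in s..1, σ' s) ≤ ∫ t in s..1, σ' t := by
      apply intervalIntegral.integral_mono_on hs.2.le intervalIntegrable_const (hσ'ii s 1)
      exact fun x hx => hσ'mono hx.1
    rw [intervalIntegral.integral_const, smul_eq_mul] at h1
    simp only [hTdef]
    rw [hP_tail s]
    linarith
  have hT_le : ∀ s ∈ Ico (0:ℝ) 1, T s ≤ 1 := by
    intro s hs
    have h1 := hP_nonneg s hs.1
    have h2 : 0 ≤ (1 - s) * σ' s :=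
      mul_nonneg (by linarith [hs.2]) (hσ'nonneg s)
    simp only [hTdef]
    linarith
  set F : ℝ → ℝ := fun s => (1 - s) * σ' s + P s with hFdef
  have hF_eq : ∀ u ∈ Ico (0:ℝ) 1, Γ (Icc 0 u) = ENNReal.ofReal (F u) := by
    intro u hu
    rw [hΓ_cdf u hu]
    congr 1
    simp only [hFdef]
    rw [hσ'eq u hu, hP_eq u hu]
  have hF_nonneg : ∀ u ∈ Ico (0:ℝ) 1, 0 ≤ F u := fun u hu =>
    add_nonneg (mul_nonneg (by linarith [hu.2]) (hσ'nonneg u)) (hP_nonneg u hu.1)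
  have hFT : ∀ s : ℝ, F s + T s = 1 := by
    intro s; simp only [hFdef, hTdef]; ring
  have hΓIio : Γ (Iio (0:ℝ)) = 0 := by
    apply measure_mono_null _ hΓ_supp
    intro x hx
    simp only [mem_compl_iff, mem_Ico, not_and, not_lt]
    intro h
    exact absurd h (not_le.mpr (mem_Iio.mp hx))
  have hΓIoi : ∀ s ∈ Ico (0:ℝ) 1, Γ (Ioi s) = ENNReal.ofReal (T s) := by
    intro s hs
    have hIic : Γ (Iic s) = ENNReal.ofReal (F s) := by
      have hsub : Iic s = Iio 0 ∪ Icc 0 s := by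
        ext x
        simp only [mem_Iic, mem_union, mem_Iio, mem_Icc]
        constructor
        · intro h
          rcases lt_or_ge x 0 with hx | hx
          · exact Or.inl hx
          · exact Or.inr ⟨hx, h⟩
        · rintro (h | h)
          · linarith [hs.1]
          · exact h.2
      rw [hsub]
      refine le_antisymm ?_ ?_
      · calc Γ (Iio 0 ∪ Icc 0 s) ≤ Γ (Iio 0) + Γ (Icc 0 s) := measure_union_le _ _
          _ = ENNReal.ofReal (F s) := by rw [hΓIio, zero_add, hF_eq s hs]
      · rw [← hF_eq s hs]
        exact measure_mono subset_union_right
    rw [← compl_Iic, measure_compl measurableSet_Iic (measure_ne_top Γ _), hIic, measure_univ]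
    rw [← ENNReal.ofReal_one, ← ENNReal.ofReal_sub _ (hF_nonneg s hs)]
    congr 1
    have := hFT s
    linarith
  -- right continuity of σ' on [0,1)
  have hσ'rc : ∀ s ∈ Ico (0:ℝ) 1, ContinuousWithinAt σ' (Ioi s) s := by
    intro s hs
    have hs1 : (0:ℝ) < 1 - s := by linarith [hs.2]
    set u : ℕ → ℝ := fun n => s + (1 - s) / (n + 2) with hudef
    have hupos : ∀ n : ℕ, (0:ℝ) < ((n:ℝ) + 2) := fun n => by positivity
    have hugt : ∀ n, s < u n := by
      intro n
      have : 0 < (1 - s)/((n:ℝ)+2) := div_pos hs1 (hupos n)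
      simp only [hudef]
      linarith
    have humem : ∀ n, u n ∈ Ico (0:ℝ) 1 := by
      intro n
      constructor
      · linarith [hugt n, hs.1]
      · have h2 : (1 - s) / ((n:ℝ) + 2) < 1 - s := by
          apply div_lt_self hs1
          have : (0:ℝ) ≤ (n:ℝ) := Nat.cast_nonneg n
          linarith
        simp only [hudef]
        linarith
    have hulim : Tendsto u atTop (𝓝 s) := by
      have h1 : Tendsto (fun n : ℕ => (1 - s) / ((n:ℝ) + 2)) atTop (𝓝 0) := by
        apply Tendsto.div_atTop tendsto_const_nhds
        exact tendsto_atTop_add_const_right _ 2 tendsto_natCast_atTop_atTop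
      have := tendsto_const_nhds.add h1 (f := fun _ : ℕ => s) (x := atTop)
      simpa using this
    have huanti : Antitone u := by
      intro m n hmn
      simp only [hudef]
      have h2 : ((m:ℝ)+2) ≤ ((n:ℝ)+2) := by
        have : (m:ℝ) ≤ (n:ℝ) := Nat.cast_le.mpr hmn
        linarith
      have := div_le_div_of_nonneg_left (le_of_lt hs1) (hupos m) h2
      linarith [div_le_div_of_nonneg_left hs1.le (hupos m) h2]
    have hmeas_t : Tendsto (fun n => Γ (Icc 0 (u n))) atTop (𝓝 (Γ (Icc 0 s))) := by
      have hinter : ⋂ n, Icc (0:ℝ) (u n) = Icc 0 s := by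
        apply Subset.antisymm
        · intro x hx
          simp only [mem_iInter, mem_Icc] at hx ⊢
          refine ⟨(hx 0).1, ?_⟩
          exact ge_of_tendsto hulim (Eventually.of_forall fun n => (hx n).2)
        · intro x hx
          simp only [mem_iInter, mem_Icc]
          exact fun n => ⟨hx.1, hx.2.trans (hugt n).le⟩
      rw [← hinter]
      exact tendsto_measure_iInter_atTop (fun n => measurableSet_Icc.nullMeasurableSet)
        (fun m n hmn => Icc_subset_Icc le_rfl (huanti hmn)) ⟨0, measure_ne_top Γ _⟩
    have hFu : Tendsto (fun n => F (u n)) atTop (𝓝 (F s)) := by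
      have h1 : Tendsto (fun n => ENNReal.ofReal (F (u n))) atTop (𝓝 (ENNReal.ofReal (F s))) := by
        have := hmeas_t
        rw [hF_eq s hs] at this
        exact this.congr (fun n => hF_eq _ (humem n))
      have h4 := (ENNReal.tendsto_toReal (ENNReal.ofReal_ne_top)).comp h1
      simp only [Function.comp_def] at h4
      rw [ENNReal.toReal_ofReal (hF_nonneg s hs)] at h4
      exact h4.congr (fun n => ENNReal.toReal_ofReal (hF_nonneg _ (humem n)))
    have hPu : Tendsto (fun n => P (u n)) atTop (𝓝 (P s)) := (hPcont.tendsto s).comp hulim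
    have hprod : Tendsto (fun n => (1 - u n) * σ' (u n)) atTop (𝓝 ((1 - s) * σ' s)) := by
      have heq : ∀ n, (1 - u n) * σ' (u n) = F (u n) - P (u n) := by
        intro n; simp only [hFdef]; ring
      have heqs : (1 - s) * σ' s = F s - P s := by simp only [hFdef]; ring
      rw [heqs]
      exact (hFu.sub hPu).congr (fun n => (heq n).symm)
    have hσu : Tendsto (fun n => σ' (u n)) atTop (𝓝 (σ' s)) := by
      have hden : Tendsto (fun n => 1 - u n) atTop (𝓝 (1 - s)) :=
        Tendsto.sub tendsto_const_nhds hulim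
      have h6 := hprod.div hden (by linarith)
      have h7 : ∀ n, ((1 - u n) * σ' (u n)) / (1 - u n) = σ' (u n) := by
        intro n
        have : (1:ℝ) - u n ≠ 0 := by linarith [(humem n).2]
        field_simp
      have h8 : ((1 - s) * σ' s) / (1 - s) = σ' s := by
        have : (1:ℝ) - s ≠ 0 := by linarith
        field_simp
      rw [h8] at h6
      exact h6.congr h7
    have hmt := hσ'mono.tendsto_nhdsGT s
    have hbdd : BddBelow (σ' '' Ioi s) := by
      refine ⟨0, ?_⟩
      rintro x ⟨y, _, rfl⟩
      exact hσ'nonneg y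
    have hinf : sInf (σ' '' Ioi s) = σ' s := by
      apply le_antisymm
      · apply ge_of_tendsto hσu
        exact Eventually.of_forall fun n => csInf_le hbdd ⟨u n, ⟨hugt n, rfl⟩⟩
      · have hne : (σ' '' Ioi s).Nonempty := ⟨σ' (u 0), ⟨u 0, hugt 0, rfl⟩⟩
        apply le_csInf hne
        rintro b ⟨y, hy, rfl⟩
        exact hσ'mono (le_of_lt hy)
    rw [hinf] at hmt
    exact hmt
  -- the potential function G and its right derivative
  set k : ℝ → ℝ := fun s => ((1 - s)^2)⁻¹ with hkdef
  have hk_nonneg : ∀ s, 0 ≤ k s := fun s => by simp only [hkdef]; positivity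
  have hk_meas : Measurable k := ((measurable_const.sub measurable_id).pow_const 2).inv
  set G : ℝ → ℝ := fun s => (1 - s)⁻¹ * (1 - P s) with hGdef
  have hG_deriv : ∀ s ∈ Ico (0:ℝ) 1, HasDerivWithinAt G (k s * T s) (Ioi s) s := by
    intro s hs
    have hs1 : (0:ℝ) < 1 - s := by linarith [hs.2]
    have hs1' : (1:ℝ) - s ≠ 0 := ne_of_gt hs1
    have hP' : HasDerivWithinAt P (σ' s) (Ici s) s :=
      intervalIntegral.integral_hasDerivWithinAt_right (hσ'ii 0 s)
        (hσ'meas.stronglyMeasurable.stronglyMeasurableAtFilter)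
        (hσ'rc s hs)
    have hbase : HasDerivAt (fun x : ℝ => 1 - x) (-1) s := by
      simpa using (hasDerivAt_id' s).const_sub (1:ℝ)
    have h1 : HasDerivWithinAt (fun x : ℝ => (1 - x)⁻¹) (k s) (Ioi s) s := by
      have h := (hbase.inv hs1')
      have : -(-1) / ((1:ℝ) - s)^2 = k s := by
        simp only [hkdef]
        field_simp
      rw [this] at h
      exact h.hasDerivWithinAt
    have h2 : HasDerivWithinAt (fun x => 1 - P x) (-(σ' s)) (Ioi s) s := by
      simpa using ((hP'.mono Ioi_subset_Ici_self).const_sub (1:ℝ))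
    have h3 : HasDerivWithinAt G (k s * (1 - P s) + (1 - s)⁻¹ * -σ' s) (Ioi s) s := h1.mul h2
    convert h3 using 1
    simp only [hkdef, hTdef, hGdef]
    field_simp
    ring
  have hG_cont : ContinuousOn G (Iio (1:ℝ)) := by
    apply ContinuousOn.mul
    · apply ContinuousOn.inv₀
      · exact (continuous_const.sub continuous_id).continuousOn
      · intro x hx
        have := mem_Iio.mp hx
        intro h
        rw [sub_eq_zero] at h
        exact absurd h.symm (ne_of_lt this)
    · exact (continuous_const.sub hPcont).continuousOn
  have hT_meas : Measurable T := by
    simp only [hTdef]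
    exact (measurable_const.sub hPcont.measurable).sub
      ((measurable_const.sub measurable_id).mul hσ'meas)
  have hkT_meas : Measurable (fun s => k s * T s) := hk_meas.mul hT_meas
  -- integrability on Ioc 0 c for c < 1
  have hIntOn : ∀ c ∈ Ico (0:ℝ) 1, IntegrableOn (fun s => k s * T s) (Ioc 0 c) volume := by
    intro c hc
    have hc1 : (0:ℝ) < 1 - c := by linarith [hc.2]
    apply Measure.integrableOn_of_bounded (M := ((1-c)^2)⁻¹) (measure_Ioc_lt_top).ne
      hkT_meas.aestronglyMeasurable
    filter_upwards [ae_restrict_mem measurableSet_Ioc] with x hx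
    have hx01 : x ∈ Ico (0:ℝ) 1 := ⟨hx.1.le, lt_of_le_of_lt hx.2 hc.2⟩
    have h1 : 0 ≤ T x := hT_nonneg x hx01
    have h2 : T x ≤ 1 := hT_le x hx01
    have h3 : 0 < 1 - x := by linarith [hx01.2]
    have h4 : k x ≤ ((1-c)^2)⁻¹ := by
      simp only [hkdef]
      apply inv_anti₀ (by positivity)
      have : 1 - c ≤ 1 - x := by linarith [hx.2]
      nlinarith
    rw [Real.norm_eq_abs, abs_of_nonneg (mul_nonneg (hk_nonneg x) h1)]
    calc k x * T x ≤ k x * 1 := mul_le_mul_of_nonneg_left h2 (hk_nonneg x)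
      _ = k x := mul_one _
      _ ≤ ((1-c)^2)⁻¹ := h4
  have hkey : ∀ c ∈ Ico (0:ℝ) 1, ∫ s in (0:ℝ)..c, k s * T s ≤ M := by
    intro c hc
    have hc1 : (0:ℝ) < 1 - c := by linarith [hc.2]
    have hint : IntervalIntegrable (fun s => k s * T s) volume 0 c := by
      rw [intervalIntegrable_iff, uIoc_of_le hc.1]
      exact hIntOn c hc
    have heq := intervalIntegral.integral_eq_sub_of_hasDeriv_right_of_le hc.1
      (hG_cont.mono (fun x hx => lt_of_le_of_lt hx.2 hc.2))
      (fun x hx => hG_deriv x ⟨hx.1.le, hx.2.trans hc.2⟩) hint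
    rw [heq]
    have hG0 : G 0 = 1 := by simp [hGdef, hP0]
    have hGc : G c ≤ M := by
      have h1 : 1 - P c ≤ (1 - c) * M := by
        rw [hP_tail c]
        have h2 : (∫ t in c..1, σ' t) ≤ ∫ _t in c..1, M := by
          apply intervalIntegral.integral_mono_on hc.2.le (hσ'ii c 1) intervalIntegrable_const
          exact fun x _ => hσ'le x
        rwa [intervalIntegral.integral_const, smul_eq_mul] at h2
      simp only [hGdef]
      calc (1-c)⁻¹ * (1 - P c) ≤ (1-c)⁻¹ * ((1-c) * M) :=
            mul_le_mul_of_nonneg_left h1 (by positivity)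
        _ = M := by field_simp
    linarith
  -- lintegral bound on Ioo 0 1
  have hIoo_bound : ∫⁻ s in Ioo (0:ℝ) 1, ENNReal.ofReal (k s * T s) ≤ ENNReal.ofReal M := by
    set c : ℕ → ℝ := fun n => 1 - 1/(n+2) with hcdef
    have hcmem : ∀ n, c n ∈ Ico (0:ℝ) 1 := by
      intro n
      have hp : (0:ℝ) < (n:ℝ) + 2 := by positivity
      constructor
      · simp only [hcdef]
        have h2 : 1/((n:ℝ)+2) ≤ 1 := by
          rw [div_le_one hp]
          have : (0:ℝ) ≤ (n:ℝ) := Nat.cast_nonneg n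
          linarith
        linarith
      · simp only [hcdef]
        have h3 : 0 < 1/((n:ℝ)+2) := by positivity
        linarith
    have hcmono : Monotone c := by
      intro m n hmn
      simp only [hcdef]
      have h2 : ((m:ℝ)+2) ≤ ((n:ℝ)+2) := by
        have : (m:ℝ) ≤ (n:ℝ) := Nat.cast_le.mpr hmn
        linarith
      have := div_le_div_of_nonneg_left one_pos.le (by positivity : (0:ℝ) < (m:ℝ)+2) h2
      linarith
    set f : ℕ → ℝ → ℝ≥0∞ :=
      fun n => (Ioc 0 (c n)).indicator (fun s => ENNReal.ofReal (k s * T s)) with hfdef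
    have hfmeas : ∀ n, Measurable (f n) :=
      fun n => (hkT_meas.ennreal_ofReal).indicator measurableSet_Ioc
    have hfmono : Monotone f := by
      intro m n hmn
      exact indicator_le_indicator_of_subset (Ioc_subset_Ioc le_rfl (hcmono hmn))
        (fun x => zero_le)
    have hsup : (fun s => ⨆ n, f n s)
        = (Ioo (0:ℝ) 1).indicator (fun s => ENNReal.ofReal (k s * T s)) := by
      funext s
      by_cases hs : s ∈ Ioo (0:ℝ) 1
      · obtain ⟨n, hn⟩ : ∃ n : ℕ, s ≤ c n := by
          have h1 : 0 < 1 - s := by linarith [hs.2]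
          obtain ⟨n, hn⟩ := exists_nat_ge (1/(1 - s))
          refine ⟨n, ?_⟩
          simp only [hcdef]
          have h2 : 1/((n:ℝ)+2) ≤ 1 - s := by
            rw [div_le_iff₀ (by positivity : (0:ℝ) < (n:ℝ)+2)]
            have h3 : 1/(1-s) ≤ (n:ℝ) + 2 := by linarith
            calc (1:ℝ) = (1/(1-s)) * (1-s) := by field_simp
              _ ≤ ((n:ℝ)+2) * (1-s) := by
                  apply mul_le_mul_of_nonneg_right h3 h1.le
              _ = (1-s) * ((n:ℝ)+2) := by ring
          linarith
        rw [indicator_of_mem hs]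
        apply le_antisymm
        · apply iSup_le
          intro m
          simp only [hfdef]
          by_cases hm : s ∈ Ioc 0 (c m)
          · rw [indicator_of_mem hm]
          · rw [indicator_of_notMem hm]
            exact zero_le
        · refine le_iSup_of_le n ?_
          simp only [hfdef]
          rw [indicator_of_mem (show s ∈ Ioc (0:ℝ) (c n) from ⟨hs.1, hn⟩)]
      · rw [indicator_of_notMem hs]
        apply le_antisymm _ zero_le
        apply iSup_le
        intro n
        simp only [hfdef]
        rw [indicator_of_notMem]
        intro hmem'
        exact hs ⟨hmem'.1, lt_of_le_of_lt hmem'.2 (hcmem n).2⟩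
    calc ∫⁻ s in Ioo (0:ℝ) 1, ENNReal.ofReal (k s * T s)
        = ∫⁻ s, (Ioo (0:ℝ) 1).indicator (fun s => ENNReal.ofReal (k s * T s)) s :=
          (lintegral_indicator measurableSet_Ioo _).symm
      _ = ∫⁻ s, ⨆ n, f n s := by rw [hsup]
      _ = ⨆ n, ∫⁻ s, f n s := lintegral_iSup hfmeas hfmono
      _ ≤ ENNReal.ofReal M := by
          apply iSup_le
          intro n
          simp only [hfdef]
          rw [lintegral_indicator measurableSet_Ioc]
          have hnn : 0 ≤ᵐ[volume.restrict (Ioc 0 (c n))] (fun s => k s * T s) := by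
            filter_upwards [ae_restrict_mem measurableSet_Ioc] with x hx
            exact mul_nonneg (hk_nonneg x)
              (hT_nonneg x ⟨hx.1.le, lt_of_le_of_lt hx.2 (hcmem n).2⟩)
          rw [← ofReal_integral_eq_lintegral_ofReal (hIntOn (c n) (hcmem n)) hnn]
          apply ENNReal.ofReal_le_ofReal
          have heq2 : ∫ s in Ioc (0:ℝ) (c n), k s * T s = ∫ s in (0:ℝ)..(c n), k s * T s := by
            rw [intervalIntegral.integral_of_le (hcmem n).1]
          rw [heq2]
          exact hkey (c n) (hcmem n)
  -- the layer representation and swap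
  have hae_mem : ∀ᵐ u ∂Γ, u ∈ Ico (0:ℝ) 1 := by
    rw [ae_iff]
    exact hΓ_supp
  set w : ℝ × ℝ → ℝ≥0∞ := fun p => if p.2 < p.1 then ENNReal.ofReal (k p.2) else 0 with hwdef
  have hwmeas : Measurable w := by
    apply Measurable.ite (measurableSet_lt measurable_snd measurable_fst)
    · exact (hk_meas.comp measurable_snd).ennreal_ofReal
    · exact measurable_const
  have hinner : ∀ u ∈ Ico (0:ℝ) 1,
      (∫⁻ s in Ioo (0:ℝ) 1, w (u, s)) = ENNReal.ofReal ((1-u)⁻¹ - 1) := by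
    intro u hu
    have h1 : (fun s => w (u, s)) = (Iio u).indicator (fun s => ENNReal.ofReal (k s)) := by
      funext s
      simp only [hwdef, indicator_apply, mem_Iio]
    rw [h1, lintegral_indicator measurableSet_Iio, Measure.restrict_restrict measurableSet_Iio]
    have h2 : Iio u ∩ Ioo (0:ℝ) 1 = Ioo 0 u := by
      ext x
      simp only [mem_inter_iff, mem_Iio, mem_Ioo]
      constructor
      · rintro ⟨h, h0, _⟩; exact ⟨h0, h⟩
      · rintro ⟨h0, h⟩; exact ⟨h, h0, h.trans hu.2⟩
    rw [h2]
    have hki : IntegrableOn k (Ioo 0 u) volume := by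
      apply Measure.integrableOn_of_bounded (M := ((1-u)^2)⁻¹) (measure_Ioo_lt_top).ne
        hk_meas.aestronglyMeasurable
      filter_upwards [ae_restrict_mem measurableSet_Ioo] with x hx
      have h3 : 0 < 1 - u := by linarith [hu.2]
      have h4 : 1 - u ≤ 1 - x := by linarith [hx.2]
      rw [Real.norm_eq_abs, abs_of_nonneg (hk_nonneg x)]
      simp only [hkdef]
      apply inv_anti₀ (by positivity)
      nlinarith
    have hknn : 0 ≤ᵐ[volume.restrict (Ioo 0 u)] k := Eventually.of_forall hk_nonneg
    rw [← ofReal_integral_eq_lintegral_ofReal hki hknn]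
    congr 1
    rw [← integral_Ioc_eq_integral_Ioo, ← intervalIntegral.integral_of_le hu.1]
    have hftc : ∫ s in (0:ℝ)..u, k s = (1-u)⁻¹ - (1-(0:ℝ))⁻¹ := by
      apply intervalIntegral.integral_eq_sub_of_hasDerivAt
      · intro x hx
        rw [uIcc_of_le hu.1] at hx
        have hx1 : (1:ℝ) - x ≠ 0 := by
          have : x < 1 := lt_of_le_of_lt hx.2 hu.2
          intro h; rw [sub_eq_zero] at h; exact absurd h.symm (ne_of_lt this)
        have hbase : HasDerivAt (fun y : ℝ => 1 - y) (-1) x := by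
          simpa using (hasDerivAt_id' x).const_sub (1:ℝ)
        have h := hbase.inv hx1
        have heq3 : -(-1) / ((1:ℝ) - x)^2 = k x := by
          simp only [hkdef]; field_simp
        rwa [heq3] at h
      · apply ContinuousOn.intervalIntegrable
        apply ContinuousOn.inv₀
        · exact ((continuous_const.sub continuous_id).pow 2).continuousOn
        · intro x hx
          rw [uIcc_of_le hu.1] at hx
          have h5 : (0:ℝ) < 1 - x := by
            have : x < 1 := lt_of_le_of_lt hx.2 hu.2
            linarith
          exact ne_of_gt (by positivity)
    rw [hftc]
    norm_num
  have hS : (∫⁻ u, ENNReal.ofReal ((1-u)⁻¹) ∂Γ) ≤ 1 + ENNReal.ofReal M := by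
    have congr1 : (∫⁻ u, ENNReal.ofReal ((1-u)⁻¹) ∂Γ)
        = ∫⁻ u, (1 + ∫⁻ s in Ioo (0:ℝ) 1, w (u, s)) ∂Γ := by
      apply lintegral_congr_ae
      filter_upwards [hae_mem] with u hu
      rw [hinner u hu]
      have h1 : (0:ℝ) < 1 - u := by linarith [hu.2]
      have h2 : (1:ℝ) ≤ (1-u)⁻¹ := by
        have := inv_anti₀ h1 (by linarith [hu.1] : 1 - u ≤ 1)
        simpa using this
      rw [← ENNReal.ofReal_one, ← ENNReal.ofReal_add (by norm_num) (by linarith)]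
      congr 1
      ring
    rw [congr1]
    rw [lintegral_add_left measurable_const]
    have hone : (∫⁻ _u, (1:ℝ≥0∞) ∂Γ) = 1 := by
      rw [lintegral_one, measure_univ]
    rw [hone]
    have hswap : (∫⁻ u, (∫⁻ s in Ioo (0:ℝ) 1, w (u, s) ∂volume) ∂Γ)
        = ∫⁻ s in Ioo (0:ℝ) 1, (∫⁻ u, w (u, s) ∂Γ) ∂volume := by
      apply lintegral_lintegral_swap
      exact (hwmeas.comp (measurable_fst.prodMk measurable_snd)).aemeasurable
    rw [hswap]
    have hfinal : (∫⁻ s in Ioo (0:ℝ) 1, (∫⁻ u, w (u, s) ∂Γ) ∂volume) ≤ ENNReal.ofReal M := by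
      have heq4 : ∀ s ∈ Ioo (0:ℝ) 1, (∫⁻ u, w (u, s) ∂Γ) = ENNReal.ofReal (k s * T s) := by
        intro s hs
        have h1 : (fun u => w (u, s)) = (Ioi s).indicator (fun _ => ENNReal.ofReal (k s)) := by
          funext u
          simp only [hwdef, indicator_apply, mem_Ioi]
        rw [h1, lintegral_indicator measurableSet_Ioi, setLIntegral_const,
          hΓIoi s ⟨hs.1.le, hs.2⟩, ← ENNReal.ofReal_mul (hk_nonneg s)]
      calc (∫⁻ s in Ioo (0:ℝ) 1, (∫⁻ u, w (u, s) ∂Γ) ∂volume)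
          = ∫⁻ s in Ioo (0:ℝ) 1, ENNReal.ofReal (k s * T s) ∂volume :=
            setLIntegral_congr_fun measurableSet_Ioo heq4
        _ ≤ ENNReal.ofReal M := hIoo_bound
    exact add_le_add_right hfinal 1
  constructor
  · exact ((measurable_const.sub measurable_id).inv).aestronglyMeasurable
  · rw [hasFiniteIntegral_iff_norm]
    have hcongr : (∫⁻ u, ENNReal.ofReal ‖(1 - u)⁻¹‖ ∂Γ) = ∫⁻ u, ENNReal.ofReal ((1-u)⁻¹) ∂Γ := by
      apply lintegral_congr_ae
      filter_upwards [hae_mem] with u hu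
      have h1 : (0:ℝ) < 1 - u := by linarith [hu.2]
      rw [Real.norm_eq_abs, abs_of_nonneg (by positivity)]
    rw [hcongr]
    exact lt_of_le_of_lt hS (by
      apply ENNReal.add_lt_top.mpr
      exact ⟨ENNReal.one_lt_top, ENNReal.ofReal_lt_top⟩)
theorem stmt_7 {Ω : Type*} [MeasurableSpace Ω] (π : Measure Ω) [IsProbabilityMeasure π]
    (L : Ω → ℝ) (hLmeas : Measurable L) (hL : Integrable L π)
    -- the spectral function σ : bounded, nonnegative, increasing, ∫σ = 1
    (σ : ℝ → ℝ)
    (hσ_nonneg : ∀ u ∈ Set.Ico (0:ℝ) 1, 0 ≤ σ u)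
    (hσ_mono : MonotoneOn σ (Set.Ico (0:ℝ) 1))
    (hσ_bdd : ∃ M, ∀ u ∈ Set.Ico (0:ℝ) 1, σ u ≤ M)
    (hσ_one : ∫ u in (0:ℝ)..1, σ u = 1)
    -- Γ_σ : the probability measure on [0,1) with distribution function (1-u)σ(u) + ∫_0^u σ(v)dv
    (Γ : Measure ℝ) [IsProbabilityMeasure Γ]
    (hΓ_supp : Γ (Set.Ico (0:ℝ) 1)ᶜ = 0)
    (hΓ_cdf : ∀ u ∈ Set.Ico (0:ℝ) 1,
      Γ (Set.Icc 0 u) = ENNReal.ofReal ((1 - u) * σ u + ∫ v in (0:ℝ)..u, σ v))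
    -- ES_{u,π}(L) = inf_b (b + (1-u)^{-1} E_π[(L-b)_+]), with ES_{0,π}(L) = E_π[L]
    (ES : ℝ → ℝ)
    (hES : ∀ u, ES u =
      sInf (Set.range fun b : ℝ => b + (1 - u)⁻¹ * ∫ ω, max (L ω - b) 0 ∂π)) :
    -- interchange of infimum and integral
    sInf {r : ℝ | ∃ β : ℝ → ℝ, Measurable β ∧
        Integrable (fun u => β u + (1 - u)⁻¹ * ∫ ω, max (L ω - β u) 0 ∂π) Γ ∧
        r = ∫ u, (β u + (1 - u)⁻¹ * ∫ ω, max (L ω - β u) 0 ∂π) ∂Γ}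
      = ∫ u, ES u ∂Γ ∧
    -- identification of the value
    (∫ u, ES u ∂Γ)
      = (Γ {(0:ℝ)}).toReal * (∫ ω, L ω ∂π) + ∫ u in ({(0:ℝ)}ᶜ), ES u ∂Γ ∧
    -- β is a minimizer iff β(u) minimizes b ↦ b + (1-u)⁻¹ E_π[(L-b)_+] for Γ-a.e. u
    (∀ β : ℝ → ℝ, Measurable β →
      Integrable (fun u => β u + (1 - u)⁻¹ * ∫ ω, max (L ω - β u) 0 ∂π) Γ →
      ((∫ u, (β u + (1 - u)⁻¹ * ∫ ω, max (L ω - β u) 0 ∂π) ∂Γ = ∫ u, ES u ∂Γ) ↔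
        ∀ᵐ u ∂Γ, β u + (1 - u)⁻¹ * ∫ ω, max (L ω - β u) 0 ∂π = ES u)) := by
  classical
  set S : Set ℝ := {r : ℝ | ∃ β : ℝ → ℝ, Measurable β ∧
        Integrable (fun u => β u + (1 - u)⁻¹ * ∫ ω, max (L ω - β u) 0 ∂π) Γ ∧
        r = ∫ u, (β u + (1 - u)⁻¹ * ∫ ω, max (L ω - β u) 0 ∂π) ∂Γ} with hSdef
  obtain ⟨EL, hELdef⟩ : ∃ x : ℝ, x = ∫ ω, L ω ∂π := ⟨_, rfl⟩
  obtain ⟨I, hIdef⟩ : ∃ f : ℝ → ℝ, f = fun b => ∫ ω, max (L ω - b) 0 ∂π := ⟨_, rfl⟩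
  obtain ⟨g, hgdef⟩ : ∃ f : ℝ → ℝ → ℝ, f = fun u b => b + (1 - u)⁻¹ * I b := ⟨_, rfl⟩
  have h01 : (0:ℝ) ∈ Ico (0:ℝ) 1 := ⟨le_refl _, one_pos⟩
  have hrange : ∀ u : ℝ,
      (Set.range fun b : ℝ => b + (1 - u)⁻¹ * ∫ ω, max (L ω - b) 0 ∂π) = Set.range (g u) := by
    intro u; simp only [hgdef, hIdef]
  have hESg : ∀ u, ES u = sInf (Set.range (g u)) := fun u => by rw [hES u, hrange u]
  have hIint : ∀ b : ℝ, Integrable (fun ω => max (L ω - b) 0) π :=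
    fun b => (hL.sub (integrable_const b)).pos_part
  have hI_nonneg : ∀ b, 0 ≤ I b := by
    intro b
    rw [hIdef]
    exact integral_nonneg (fun ω => le_max_right _ _)
  have hI_ge : ∀ b, EL - b ≤ I b := by
    intro b
    have hsub : Integrable (fun ω => L ω - b) π := hL.sub (integrable_const b)
    have h1 : (∫ ω, (L ω - b) ∂π) ≤ ∫ ω, max (L ω - b) 0 ∂π :=
      integral_mono hsub (hIint b) (fun ω => le_max_left _ _)
    rw [integral_sub hL (integrable_const b), integral_const] at h1
    simp only [measure_univ, ENNReal.toReal_one, probReal_univ, smul_eq_mul, one_mul] at h1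
    rw [hIdef, hELdef]
    exact h1
  have hI_lip : ∀ b b' : ℝ, |I b - I b'| ≤ |b - b'| := by
    intro b b'
    have heq : I b - I b' = ∫ ω, (max (L ω - b) 0 - max (L ω - b') 0) ∂π := by
      rw [hIdef]
      exact (integral_sub (hIint b) (hIint b')).symm
    rw [heq]
    calc |∫ ω, (max (L ω - b) 0 - max (L ω - b') 0) ∂π|
        ≤ ∫ ω, |max (L ω - b) 0 - max (L ω - b') 0| ∂π := by
          simpa [Real.norm_eq_abs] using
            norm_integral_le_integral_norm (μ := π)
              (fun ω => max (L ω - b) 0 - max (L ω - b') 0)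
      _ ≤ ∫ _ω, |b - b'| ∂π := by
          apply integral_mono ((hIint b).sub (hIint b')).abs (integrable_const _)
          intro ω
          calc |max (L ω - b) 0 - max (L ω - b') 0| ≤ |(L ω - b) - (L ω - b')| :=
                abs_max_sub_max_le_abs _ _ _
            _ = |b - b'| := by rw [show (L ω - b) - (L ω - b') = -(b - b') by ring, abs_neg]
      _ = |b - b'| := by
          rw [integral_const]
          simp [measure_univ]
  have hI_cont : Continuous I := by
    apply LipschitzWith.continuous (K := 1) (f := I)
    apply LipschitzWith.of_dist_le_mul
    intro b b'
    rw [Real.dist_eq, Real.dist_eq]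
    simpa using hI_lip b b'
  have hc_pos : ∀ u ∈ Ico (0:ℝ) 1, (0:ℝ) < 1 - u := fun u hu => by linarith [hu.2]
  have hc_ge : ∀ u ∈ Ico (0:ℝ) 1, (1:ℝ) ≤ (1-u)⁻¹ := by
    intro u hu
    have h1 := hc_pos u hu
    have := inv_anti₀ h1 (by linarith [hu.1] : 1 - u ≤ 1)
    simpa using this
  have hg_ge : ∀ u ∈ Ico (0:ℝ) 1, ∀ b, EL ≤ g u b := by
    intro u hu b
    have hc := hc_ge u hu
    have h0 := hI_nonneg b
    have h1 := hI_ge b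
    simp only [hgdef]
    nlinarith [mul_nonneg (sub_nonneg.mpr hc) h0]
  have hbdd : ∀ u ∈ Ico (0:ℝ) 1, BddBelow (Set.range (g u)) := by
    intro u hu
    refine ⟨EL, ?_⟩
    rintro x ⟨b, rfl⟩
    exact hg_ge u hu b
  have hES_ge : ∀ u ∈ Ico (0:ℝ) 1, EL ≤ ES u := by
    intro u hu
    rw [hESg u]
    apply le_csInf (range_nonempty _)
    rintro x ⟨b, rfl⟩
    exact hg_ge u hu b
  have hES_le : ∀ u ∈ Ico (0:ℝ) 1, ∀ b, ES u ≤ g u b := by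
    intro u hu b
    rw [hESg u]
    exact csInf_le (hbdd u hu) (mem_range_self b)
  have hg_lip : ∀ u ∈ Ico (0:ℝ) 1, ∀ b b' : ℝ, g u b ≤ g u b' + (1 + (1-u)⁻¹) * |b - b'| := by
    intro u hu b b'
    have h1 := hc_pos u hu
    have hc0 : (0:ℝ) ≤ (1-u)⁻¹ := le_of_lt (inv_pos.mpr h1)
    have h2 := hI_lip b b'
    have h3 : I b ≤ I b' + |b - b'| := by
      have := le_trans (le_abs_self (I b - I b')) h2
      linarith
    have hb : b ≤ b' + |b - b'| := by
      have := le_abs_self (b - b')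
      linarith
    have hA : (1-u)⁻¹ * I b ≤ (1-u)⁻¹ * (I b' + |b - b'|) :=
      mul_le_mul_of_nonneg_left h3 hc0
    simp only [hgdef]
    nlinarith [hA, hb]
  have hg_meas : ∀ b : ℝ, Measurable (fun u => g u b) := by
    intro b
    simp only [hgdef]
    exact measurable_const.add (((measurable_const.sub measurable_id).inv).mul_const _)
  obtain ⟨ψ, hψdef⟩ : ∃ f : ℝ → ℝ, f = fun u => ⨅ q : ℚ, g u (q : ℝ) := ⟨_, rfl⟩
  have hψ_meas : Measurable ψ := by
    rw [hψdef]
    exact Measurable.iInf (fun q => hg_meas (q : ℝ))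
  have hψ_ap : ∀ u, ψ u = ⨅ q : ℚ, g u (q : ℝ) := fun u => by rw [hψdef]
  have hψ_eq : ∀ u ∈ Ico (0:ℝ) 1, ψ u = ES u := by
    intro u hu
    rw [hψ_ap u]
    have h1 := hc_pos u hu
    have hbq : BddBelow (Set.range fun q : ℚ => g u (q:ℝ)) := by
      refine ⟨EL, ?_⟩
      rintro x ⟨q, rfl⟩
      exact hg_ge u hu (q : ℝ)
    apply le_antisymm
    · refine le_of_forall_pos_le_add fun ε hε => ?_
      have hsinf : sInf (Set.range (g u)) < sInf (Set.range (g u)) + ε/2 := by linarith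
      obtain ⟨x, ⟨b, rfl⟩, hx⟩ := exists_lt_of_csInf_lt (range_nonempty (g u)) hsinf
      obtain ⟨q, hq⟩ := exists_rat_near b (show (0:ℝ) < ε/2 / (1 + (1-u)⁻¹) by positivity)
      rw [abs_sub_comm] at hq
      have hlip := hg_lip u hu (q : ℝ) b
      have h2 : (1 + (1-u)⁻¹) * |(q:ℝ) - b| < ε/2 := by
        have hpos : (0:ℝ) < 1 + (1-u)⁻¹ := by positivity
        calc (1 + (1-u)⁻¹) * |(q:ℝ) - b| < (1 + (1-u)⁻¹) * (ε/2 / (1 + (1-u)⁻¹)) :=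
              mul_lt_mul_of_pos_left hq hpos
          _ = ε/2 := by
              rw [mul_comm]
              exact div_mul_cancel₀ _ (ne_of_gt hpos)
      have h3 : (⨅ q : ℚ, g u (q : ℝ)) ≤ g u (q : ℝ) := ciInf_le hbq q
      rw [hESg u]
      linarith
    · rw [hESg u]
      apply le_ciInf
      intro q
      exact csInf_le (hbdd u hu) (mem_range_self _)
  -- ES 0 = EL
  have hJint : ∀ b : ℝ, Integrable (fun ω => max (b - L ω) 0) π := fun b =>
    ((integrable_const b).sub hL).pos_part
  have hJlim : Tendsto (fun b => ∫ ω, max (b - L ω) 0 ∂π) atBot (𝓝 0) := by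
    have key := tendsto_integral_filter_of_dominated_convergence (μ := π)
      (F := fun (b : ℝ) ω => max (b - L ω) 0) (f := fun _ => (0:ℝ)) (l := atBot)
      (fun ω => |L ω|)
      (Eventually.of_forall fun b => (hJint b).aestronglyMeasurable)
      ?_ hL.abs ?_
    · simpa using key
    · rw [eventually_atBot]
      refine ⟨0, fun b hb => Eventually.of_forall fun ω => ?_⟩
      rw [Real.norm_eq_abs, abs_of_nonneg (le_max_right _ _)]
      apply max_le _ (abs_nonneg _)
      have := neg_abs_le (L ω)
      linarith
    · apply Eventually.of_forall fun ω => ?_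
      apply Tendsto.congr' ?_ (tendsto_const_nhds (α := ℝ))
      filter_upwards [eventually_le_atBot (L ω)] with b hb
      exact (max_eq_right (by linarith)).symm
  have hgid0 : ∀ b : ℝ, g 0 b = EL + ∫ ω, max (b - L ω) 0 ∂π := by
    intro b
    simp only [hgdef, hIdef, hELdef]
    rw [sub_zero, inv_one, one_mul]
    have hpt : (fun ω => max (L ω - b) 0) = fun ω => (L ω - b) + max (b - L ω) 0 := by
      funext ω
      rcases le_total (L ω) b with h | h
      · rw [max_eq_right (by linarith), max_eq_left (by linarith)]
        ring
      · rw [max_eq_left (by linarith), max_eq_right (by linarith)]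
        ring
    have hint1 : Integrable (fun ω => L ω - b) π := hL.sub (integrable_const b)
    rw [hpt, integral_add hint1 (hJint b), integral_sub hL (integrable_const b), integral_const]
    simp only [measure_univ, ENNReal.toReal_one, probReal_univ, smul_eq_mul, one_mul]
    ring
  have hES0 : ES 0 = EL := by
    rw [hESg 0]
    apply le_antisymm
    · refine le_of_forall_pos_le_add fun ε hε => ?_
      have hev : ∀ᶠ b in atBot, (∫ ω, max (b - L ω) 0 ∂π) < ε :=
        hJlim.eventually_lt_const hε
      obtain ⟨b, hb⟩ := hev.exists
      calc sInf (Set.range (g 0)) ≤ g 0 b := csInf_le (hbdd 0 h01) (mem_range_self b)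
        _ = EL + ∫ ω, max (b - L ω) 0 ∂π := hgid0 b
        _ ≤ EL + ε := by linarith
    · apply le_csInf (range_nonempty _)
      rintro x ⟨b, rfl⟩
      exact hg_ge 0 h01 b
  -- Γ-side facts
  have hae_mem : ∀ᵐ u ∂Γ, u ∈ Ico (0:ℝ) 1 := by
    rw [ae_iff]
    exact hΓ_supp
  have hinv_int : Integrable (fun u => (1 - u)⁻¹) Γ :=
    gamma_inv_integrable σ hσ_nonneg hσ_mono hσ_bdd hσ_one Γ hΓ_supp hΓ_cdf
  have hES_meas : AEStronglyMeasurable ES Γ := by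
    apply (hψ_meas.aestronglyMeasurable).congr
    filter_upwards [hae_mem] with u hu using hψ_eq u hu
  have hES_int : Integrable ES Γ := by
    apply Integrable.mono' ((integrable_const |EL|).add (hinv_int.const_mul (I 0))) hES_meas
    filter_upwards [hae_mem] with u hu
    simp only [Pi.add_apply]
    have h1 := hES_ge u hu
    have h2 := hES_le u hu 0
    have h3 : g u 0 = (1-u)⁻¹ * I 0 := by simp [hgdef]
    have h4 : (0:ℝ) ≤ (1-u)⁻¹ * I 0 :=
      mul_nonneg (le_of_lt (inv_pos.mpr (hc_pos u hu))) (hI_nonneg 0)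
    rw [Real.norm_eq_abs, abs_le]
    constructor
    · have := neg_abs_le EL
      linarith
    · have h5 : ES u ≤ (1-u)⁻¹ * I 0 := by rw [← h3]; exact h2
      have h6 : (1-u)⁻¹ * I 0 = I 0 * (1-u)⁻¹ := mul_comm _ _
      have := abs_nonneg EL
      linarith [neg_abs_le EL, le_abs_self EL]
  -- measurable ε-optimal selection
  have hsel : ∀ ε : ℝ, 0 < ε → ∃ β : ℝ → ℝ, Measurable β ∧
      ∀ u ∈ Ico (0:ℝ) 1, g u (β u) < ES u + ε := by
    intro ε hε
    obtain ⟨e, hesurj'⟩ : ∃ e : ℕ → ℚ, Function.Surjective e :=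
      ⟨_, (Denumerable.eqv ℚ).symm.surjective⟩
    have hesurj : ∀ q : ℚ, ∃ n, e n = q := fun q => hesurj' q
    set p : ℕ → ℝ → Prop := fun n u => g u ((e n : ℝ)) < ψ u + ε ∨ u ∉ Ico (0:ℝ) 1 with hpdef
    have hex : ∀ u, ∃ n, p n u := by
      intro u
      by_cases hu : u ∈ Ico (0:ℝ) 1
      · have h1 := hc_pos u hu
        have hsinf : sInf (Set.range (g u)) < sInf (Set.range (g u)) + ε/2 := by linarith
        obtain ⟨x, ⟨b, rfl⟩, hx⟩ := exists_lt_of_csInf_lt (range_nonempty (g u)) hsinf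
        obtain ⟨q, hq⟩ := exists_rat_near b (show (0:ℝ) < ε/2 / (1 + (1-u)⁻¹) by positivity)
        obtain ⟨n, hn⟩ := hesurj q
        refine ⟨n, Or.inl ?_⟩
        rw [hn]
        rw [abs_sub_comm] at hq
        have hlip := hg_lip u hu (q : ℝ) b
        have h2 : (1 + (1-u)⁻¹) * |(q:ℝ) - b| < ε/2 := by
          have hpos : (0:ℝ) < 1 + (1-u)⁻¹ := by positivity
          calc (1 + (1-u)⁻¹) * |(q:ℝ) - b| < (1 + (1-u)⁻¹) * (ε/2 / (1 + (1-u)⁻¹)) :=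
                mul_lt_mul_of_pos_left hq hpos
            _ = ε/2 := by
                rw [mul_comm]
                exact div_mul_cancel₀ _ (ne_of_gt hpos)
        have h5 : ψ u = ES u := hψ_eq u hu
        have h6 := hESg u
        linarith
      · exact ⟨0, Or.inr hu⟩
    refine ⟨fun u => ((e (Nat.find (hex u)) : ℝ)), ?_, ?_⟩
    · refine Measurable.find (f := fun n (_ : ℝ) => ((e n : ℝ))) (p := p)
        (fun n => measurable_const) (fun n => ?_) hex
      have hset : {x | p n x} = {x | g x ((e n : ℝ)) < ψ x + ε} ∪ (Ico (0:ℝ) 1)ᶜ := by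
        ext x
        simp only [hpdef, mem_setOf_eq, mem_union, mem_compl_iff]
      rw [hset]
      exact (measurableSet_lt (hg_meas _) (hψ_meas.add_const ε)).union
        measurableSet_Ico.compl
    · intro u hu
      have hspec := Nat.find_spec (hex u)
      rcases hspec with h | h
      · have h2 : g u ((e (Nat.find (hex u)) : ℝ)) < ES u + ε := by
          rw [← hψ_eq u hu]
          exact h
        exact h2
      · exact absurd hu h
  -- lower bound for elements of S
  have hlb : ∀ r ∈ S, (∫ u, ES u ∂Γ) ≤ r := by
    rintro r ⟨β, hβmeas, hβint, rfl⟩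
    apply integral_mono_ae hES_int hβint
    filter_upwards [hae_mem] with u hu
    have := hES_le u hu (β u)
    simpa only [hgdef, hIdef] using this
  -- candidates
  have hcand : ∀ ε : ℝ, 0 < ε → ∃ r ∈ S, r ≤ (∫ u, ES u ∂Γ) + ε := by
    intro ε hε
    obtain ⟨β, hβmeas, hβprop⟩ := hsel ε hε
    have hgβ_meas : Measurable (fun u => β u + (1 - u)⁻¹ * ∫ ω, max (L ω - β u) 0 ∂π) := by
      have hm : Measurable (fun u => β u + (1 - u)⁻¹ * I (β u)) :=
        hβmeas.add (((measurable_const.sub measurable_id).inv).mul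
          (hI_cont.measurable.comp hβmeas))
      simpa only [hIdef] using hm
    have hgβ_bound : ∀ᵐ u ∂Γ, ES u ≤ β u + (1 - u)⁻¹ * (∫ ω, max (L ω - β u) 0 ∂π) ∧
        β u + (1 - u)⁻¹ * (∫ ω, max (L ω - β u) 0 ∂π) ≤ ES u + ε := by
      filter_upwards [hae_mem] with u hu
      have h1 := hES_le u hu (β u)
      have h2 := hβprop u hu
      simp only [hgdef, hIdef] at h1 h2
      exact ⟨h1, le_of_lt h2⟩
    have hgβ_int : Integrable (fun u => β u + (1 - u)⁻¹ * ∫ ω, max (L ω - β u) 0 ∂π) Γ := by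
      apply Integrable.mono' (hES_int.abs.add (integrable_const ε))
        hgβ_meas.aestronglyMeasurable
      filter_upwards [hgβ_bound] with u hu
      simp only [Pi.add_apply]
      rw [Real.norm_eq_abs, abs_le]
      constructor
      · have := neg_abs_le (ES u)
        linarith [hu.1]
      · have := le_abs_self (ES u)
        linarith [hu.2]
    refine ⟨_, ⟨β, hβmeas, hgβ_int, rfl⟩, ?_⟩
    have hESε : Integrable (fun u => ES u + ε) Γ := hES_int.add (integrable_const ε)
    have hmono := integral_mono_ae hgβ_int hESε
      (by filter_upwards [hgβ_bound] with u hu using hu.2)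
    have hsum : (∫ u, (ES u + ε) ∂Γ) = (∫ u, ES u ∂Γ) + ε := by
      rw [integral_add hES_int (integrable_const ε), integral_const]
      simp [measure_univ]
    rw [hsum] at hmono
    exact hmono
  have hSne : S.Nonempty := by
    obtain ⟨r, hr, _⟩ := hcand 1 one_pos
    exact ⟨r, hr⟩
  have hpart1 : sInf S = ∫ u, ES u ∂Γ := by
    apply le_antisymm
    · apply le_of_forall_pos_le_add
      intro ε hε
      obtain ⟨r, hrS, hrle⟩ := hcand ε hε
      exact (csInf_le ⟨∫ u, ES u ∂Γ, fun r' hr' => hlb r' hr'⟩ hrS).trans hrle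
    · exact le_csInf hSne hlb
  refine ⟨hpart1, ?_, ?_⟩
  · -- part 2
    have hsplit := integral_add_compl (measurableSet_singleton (0:ℝ)) hES_int
    rw [← hsplit]
    congr 1
    rw [Measure.restrict_singleton, integral_smul_measure, integral_dirac, hES0, smul_eq_mul,
      hELdef]
  · -- part 3
    intro β hβ hβint
    constructor
    · intro h
      have hnn : 0 ≤ᵐ[Γ] fun u =>
          (β u + (1 - u)⁻¹ * ∫ ω, max (L ω - β u) 0 ∂π) - ES u := by
        filter_upwards [hae_mem] with u hu
        have := hES_le u hu (β u)
        simp only [hgdef, hIdef] at this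
        simp only [Pi.zero_apply]
        linarith
      have hint : Integrable
          (fun u => (β u + (1 - u)⁻¹ * ∫ ω, max (L ω - β u) 0 ∂π) - ES u) Γ :=
        hβint.sub hES_int
      have hzero : (∫ u, ((β u + (1 - u)⁻¹ * ∫ ω, max (L ω - β u) 0 ∂π) - ES u) ∂Γ) = 0 := by
        rw [integral_sub hβint hES_int, h, sub_self]
      have hae0 := (integral_eq_zero_iff_of_nonneg_ae hnn hint).mp hzero
      filter_upwards [hae0] with u hu
      have : (β u + (1 - u)⁻¹ * ∫ ω, max (L ω - β u) 0 ∂π) - ES u = 0 := hu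
      linarith
    · intro h
      exact integral_congr_ae h
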